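/- Let Λ be a real diagonal n×n matrix and let U be an n×n complex unitary matrix that is symmetric (Uᵗ = U) and commutes with Λ (UΛ = ΛU). Then there exists an n×n complex unitary matrix k that is symmetric (kᵗ = k), commutes with Λ (kΛ = Λk), and satisfies k² = U. -/

import Mathlib

open Matrix

open scoped Matrix.Norms.L2Operator in
theorem aux_8 (n : ℕ) (l : Fin n → ℝ)
    (U : Matrix (Fin n) (Fin n) ℂ)
    (hU : Uᴴ * U = 1) (hsym : Uᵀ = U)
    (hcomm : U * Matrix.diagonal (fun i => (l i : ℂ)) =
      Matrix.diagonal (fun i => (l i : ℂ)) * U) :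
    ∃ k : Matrix (Fin n) (Fin n) ℂ,
      kᴴ * k = 1 ∧ kᵀ = k ∧
      k * Matrix.diagonal (fun i => (l i : ℂ)) =
        Matrix.diagonal (fun i => (l i : ℂ)) * k ∧
      k * k = U := by
  letI : CStarAlgebra (Matrix (Fin n) (Fin n) ℂ) := { }
  set D : Matrix (Fin n) (Fin n) ℂ := Matrix.diagonal (fun i => (l i : ℂ)) with hD
  have hU' : U * Uᴴ = 1 := mul_eq_one_comm.mp hU
  have hstar : star U = Uᴴ := rfl
  have hUnit : U ∈ unitary (Matrix (Fin n) (Fin n) ℂ) := ⟨hU, hU'⟩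
  have hnormal : IsStarNormal U := ⟨by rw [Commute, SemiconjBy, hstar, hU, hU']⟩
  set f : ℂ → ℂ := fun z => Complex.exp (Complex.log z / 2) with hf
  have hfin : (spectrum ℂ U).Finite := Matrix.finite_spectrum U
  have hcont : ContinuousOn f (spectrum ℂ U) := hfin.continuousOn f
  have hconts : ContinuousOn (fun z => star (f z)) (spectrum ℂ U) := hfin.continuousOn _
  have hspec : spectrum ℂ U ⊆ Metric.sphere (0 : ℂ) 1 :=
    spectrum.subset_circle_of_unitary hUnit
  have habs : ∀ z ∈ spectrum ℂ U, ‖z‖ = 1 := by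
    intro z hz
    simpa [Complex.dist_eq] using hspec hz
  set k : Matrix (Fin n) (Fin n) ℂ := cfc f U with hk
  -- k is in the elemental star algebra of U
  have hk_mem : k ∈ StarAlgebra.elemental ℂ U := by
    rw [hk, cfc_apply f U hnormal hcont, cfcHom_eq_of_isStarNormal]
    exact SetLike.coe_mem _
  -- the closed star subalgebra of symmetric matrices commuting with D, inside elemental
  let T : StarSubalgebra ℂ (Matrix (Fin n) (Fin n) ℂ) :=
    { carrier := {A | A ∈ StarAlgebra.elemental ℂ U ∧ Aᵀ = A ∧ A * D = D * A}
      mul_mem' := by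
        rintro A B ⟨hA1, hA2, hA3⟩ ⟨hB1, hB2, hB3⟩
        have hAB : A * B = B * A := by
          have := mul_comm (⟨A, hA1⟩ : StarAlgebra.elemental ℂ U) ⟨B, hB1⟩
          exact congrArg Subtype.val this
        refine ⟨mul_mem hA1 hB1, ?_, ?_⟩
        · rw [Matrix.transpose_mul, hA2, hB2, hAB]
        · rw [mul_assoc, hB3, ← mul_assoc, hA3, mul_assoc]
      add_mem' := by
        rintro A B ⟨hA1, hA2, hA3⟩ ⟨hB1, hB2, hB3⟩
        exact ⟨add_mem hA1 hB1, by rw [Matrix.transpose_add, hA2, hB2],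
          by rw [add_mul, mul_add, hA3, hB3]⟩
      algebraMap_mem' := by
        intro c
        refine ⟨algebraMap_mem _ c, ?_, Algebra.commutes c D⟩
        rw [Matrix.algebraMap_eq_diagonal]
        exact Matrix.diagonal_transpose _
      star_mem' := by
        rintro A ⟨hA1, hA2, hA3⟩
        refine ⟨star_mem hA1, ?_, ?_⟩
        · show (Aᴴ)ᵀ = Aᴴ
          ext i j
          simp only [Matrix.transpose_apply, Matrix.conjTranspose_apply]
          exact congrArg star (congrFun (congrFun hA2 j) i)
        · have hDstar : star D = D := by
            ext i j
            rcases eq_or_ne i j with h | h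
            · subst h
              simp [hD, Matrix.star_apply, Complex.conj_ofReal]
            · simp [hD, Matrix.star_apply, Matrix.diagonal_apply_ne, h, Ne.symm h]
          calc star A * D = star A * star D := by rw [hDstar]
            _ = star (D * A) := by rw [StarMul.star_mul]
            _ = star (A * D) := by rw [hA3]
            _ = star D * star A := by rw [StarMul.star_mul]
            _ = D * star A := by rw [hDstar] }
  have hT_closed : IsClosed (T : Set (Matrix (Fin n) (Fin n) ℂ)) := by
    have h1 : IsClosed {A : Matrix (Fin n) (Fin n) ℂ | Aᵀ = A} := by
      have hct : Continuous fun A : Matrix (Fin n) (Fin n) ℂ => Aᵀ :=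
        LinearMap.continuous_of_finiteDimensional
          (Matrix.transposeLinearEquiv (Fin n) (Fin n) ℂ ℂ).toLinearMap
      exact isClosed_eq hct continuous_id
    have h2 : IsClosed {A : Matrix (Fin n) (Fin n) ℂ | A * D = D * A} :=
      isClosed_eq (continuous_id.mul continuous_const) (continuous_const.mul continuous_id)
    have hset : (T : Set (Matrix (Fin n) (Fin n) ℂ)) =
        ((StarAlgebra.elemental ℂ U : Set (Matrix (Fin n) (Fin n) ℂ)) ∩ {A | Aᵀ = A}) ∩
          {A | A * D = D * A} := by
      ext A
      simp only [Set.mem_inter_iff, Set.mem_setOf_eq, SetLike.mem_coe, and_assoc]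
      rfl
    rw [hset]
    exact ((StarAlgebra.elemental.isClosed ℂ U).inter h1).inter h2
  have hUT : U ∈ T := ⟨StarAlgebra.elemental.self_mem ℂ U, hsym, hcomm⟩
  have hle := StarAlgebra.elemental.le_of_mem hT_closed hUT
  obtain ⟨-, hk_sym, hk_comm⟩ := hle hk_mem
  refine ⟨k, ?_, hk_sym, hk_comm, ?_⟩
  · -- unitary
    have : kᴴ * k = star k * k := rfl
    rw [this, hk, ← cfc_star f U, ← cfc_mul _ _ U hconts hcont]
    calc cfc (fun z => star (f z) * f z) U = cfc (fun _ : ℂ => (1 : ℂ)) U := by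
          apply cfc_congr
          intro z hz
          have hz1 : ‖z‖ = 1 := habs z hz
          show star (Complex.exp (Complex.log z / 2)) * Complex.exp (Complex.log z / 2) = 1
          rw [RCLike.star_def, ← Complex.exp_conj, ← Complex.exp_add]
          have h2 : (starRingEnd ℂ) (Complex.log z / 2) + Complex.log z / 2 =
              ((Complex.log z).re : ℂ) := by
            rw [map_div₀, map_ofNat, ← add_div, add_comm, Complex.add_conj]
            push_cast
            ring
          rw [h2, Complex.log_re, hz1, Real.log_one, Complex.ofReal_zero, Complex.exp_zero]
      _ = 1 := cfc_const_one ℂ U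
  · -- square
    rw [hk, ← cfc_mul f f U hcont hcont]
    calc cfc (fun z => f z * f z) U = cfc (id : ℂ → ℂ) U := by
          apply cfc_congr
          intro z hz
          have hz0 : z ≠ 0 := by
            intro h
            have := habs z hz
            simp [h] at this
          show Complex.exp (Complex.log z / 2) * Complex.exp (Complex.log z / 2) = z
          rw [← Complex.exp_add, ← add_div, ← mul_two, mul_div_cancel_right₀ _ two_ne_zero,
            Complex.exp_log hz0]
      _ = U := cfc_id ℂ U

theorem stmt_8 (n : ℕ) (l : Fin n → ℝ)
    (U : Matrix (Fin n) (Fin n) ℂ)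
    (hU : Uᴴ * U = 1) (hsym : Uᵀ = U)
    (hcomm : U * Matrix.diagonal (fun i => (l i : ℂ)) =
      Matrix.diagonal (fun i => (l i : ℂ)) * U) :
    ∃ k : Matrix (Fin n) (Fin n) ℂ,
      kᴴ * k = 1 ∧ kᵀ = k ∧
      k * Matrix.diagonal (fun i => (l i : ℂ)) =
        Matrix.diagonal (fun i => (l i : ℂ)) * k ∧
      k * k = U := by
  exact aux_8 n l U hU hsym hcomm
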